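/- If c̃₁ and c̃₂ are conditionally independent given a random variable Θ, with each conditionally uniform on [−π/K, π/K) given Θ, then E[e^{−i c̃₁} e^{i c̃₂}] = sinc²(1/K). -/

import Mathlib

open MeasureTheory Real ProbabilityTheory Set

lemma key_int' (b : ℝ) (hb : 0 < b) (c : ℂ) (hc : c = Complex.I ∨ c = -Complex.I) :
    ∫ x in Set.Ico (-b) b, Complex.exp (c * x) = 2 * Real.sin b := by
  have hc0 : c ≠ 0 := by rcases hc with rfl | rfl <;> simp [Complex.I_ne_zero]
  have h1 : ∫ x in Set.Ico (-b) b, Complex.exp (c * x) = ∫ x in (-b)..b, Complex.exp (c * x) := by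
    rw [intervalIntegral.integral_of_le (by linarith), MeasureTheory.integral_Ioc_eq_integral_Ioo,
      MeasureTheory.integral_Ico_eq_integral_Ioo]
  rw [h1, integral_exp_mul_complex hc0]
  rcases hc with rfl | rfl
  · rw [mul_comm _ (b:ℂ), mul_comm _ ((-b:ℝ):ℂ), Complex.exp_mul_I, Complex.exp_mul_I]
    push_cast
    rw [Complex.cos_neg, Complex.sin_neg, ← Complex.ofReal_sin]
    field_simp
    ring_nf
    try rw [Complex.I_sq]
    try ring
  · have e1 : -Complex.I * (b:ℂ) = ((-b:ℝ):ℂ) * Complex.I := by push_cast; ring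
    have e2 : -Complex.I * ((-b:ℝ):ℂ) = (b:ℂ) * Complex.I := by push_cast; ring
    rw [e1, e2, Complex.exp_mul_I, Complex.exp_mul_I]
    push_cast
    rw [Complex.cos_neg, Complex.sin_neg, ← Complex.ofReal_sin]
    field_simp
    ring_nf
    try rw [Complex.I_sq]
    try ring

lemma unif_int (K : ℕ) (hK : 1 ≤ K) (c : ℂ) (hc : c = Complex.I ∨ c = -Complex.I) :
    ∫ x, Complex.exp (c * x)
        ∂((ENNReal.ofReal ((K : ℝ) / (2 * π))) •
          (volume.restrict (Set.Ico (-(π / (K : ℝ))) (π / (K : ℝ))))) =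
      ((Real.sin (π / K) / (π / K) : ℝ) : ℂ) := by
  have hKpos : (0:ℝ) < K := by exact_mod_cast hK
  have hb : 0 < π / K := by positivity
  rw [integral_smul_measure, key_int' _ hb c hc,
    ENNReal.toReal_ofReal (by positivity)]
  rw [Complex.real_smul]
  push_cast
  have h1 : (π:ℂ) ≠ 0 := by exact_mod_cast Real.pi_ne_zero
  have h2 : (K:ℂ) ≠ 0 := by exact_mod_cast hKpos.ne'
  field_simp

lemma ae_indepFun {Ω : Type*} {m' : MeasurableSpace Ω} [mΩ : MeasurableSpace Ω]
    [StandardBorelSpace Ω]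
    {μ : Measure Ω} [IsProbabilityMeasure μ] (hm' : m' ≤ mΩ)
    {c₁ c₂ : Ω → ℝ} (hc₁ : Measurable c₁) (hc₂ : Measurable c₂)
    (h : CondIndepFun m' hm' c₁ c₂ μ) :
    ∀ᵐ ω ∂μ, IndepFun c₁ c₂ (condExpKernel μ m' ω) := by
  have h' : ∀ q r : ℚ, ∀ᵐ ω ∂μ,
      condExpKernel μ m' ω (c₁ ⁻¹' Iic (q:ℝ) ∩ c₂ ⁻¹' Iic (r:ℝ)) =
        condExpKernel μ m' ω (c₁ ⁻¹' Iic (q:ℝ)) * condExpKernel μ m' ω (c₂ ⁻¹' Iic (r:ℝ)) := by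
    intro q r
    exact ae_of_ae_trim hm'
      (h (c₁ ⁻¹' Iic (q:ℝ)) (c₂ ⁻¹' Iic (r:ℝ))
        ⟨Iic (q:ℝ), measurableSet_Iic, rfl⟩ ⟨Iic (r:ℝ), measurableSet_Iic, rfl⟩)
  have h'' := ae_all_iff.2 fun q : ℚ => ae_all_iff.2 fun r : ℚ => h' q r
  filter_upwards [h''] with ω hω
  set ν := condExpKernel μ m' ω
  have : IsProbabilityMeasure ν := inferInstance
  -- π-systems
  set p₁ : Set (Set Ω) := (preimage c₁) '' (⋃ q : ℚ, {Iic (q:ℝ)}) with hp₁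
  set p₂ : Set (Set Ω) := (preimage c₂) '' (⋃ q : ℚ, {Iic (q:ℝ)}) with hp₂
  have hpi : IsPiSystem (⋃ q : ℚ, {Iic (q:ℝ)}) := by
    rintro s hs t ht -
    simp only [mem_iUnion, mem_singleton_iff] at hs ht ⊢
    obtain ⟨q, rfl⟩ := hs
    obtain ⟨r, rfl⟩ := ht
    exact ⟨min q r, by push_cast [Iic_inter_Iic]; rfl⟩
  refine IndepSets.indep (hc₁.comap_le) (hc₂.comap_le) (hpi.comap c₁) (hpi.comap c₂) ?_ ?_ ?_
  · rw [show (measurableSpace : MeasurableSpace ℝ) = borel ℝ from BorelSpace.measurable_eq,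
      Real.borel_eq_generateFrom_Iic_rat, MeasurableSpace.comap_generateFrom]
    rfl
  · rw [show (measurableSpace : MeasurableSpace ℝ) = borel ℝ from BorelSpace.measurable_eq,
      Real.borel_eq_generateFrom_Iic_rat, MeasurableSpace.comap_generateFrom]
    rfl
  · rintro t1 t2 ⟨s1, hs1, rfl⟩ ⟨s2, hs2, rfl⟩
    simp only [mem_iUnion, mem_singleton_iff] at hs1 hs2
    obtain ⟨q, rfl⟩ := hs1
    obtain ⟨r, rfl⟩ := hs2
    exact ae_of_all _ fun _ => hω q r

lemma integrable_of_bound_one {α : Type*} {mα : MeasurableSpace α} {μ : Measure α}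
    [IsFiniteMeasure μ] {E : Type*} [NormedAddCommGroup E] {F : α → E}
    (hF : AEStronglyMeasurable F μ) (h : ∀ a, ‖F a‖ ≤ 1) : Integrable F μ :=
  (integrable_const (1:ℝ)).mono' hF (Filter.Eventually.of_forall h)

lemma indep_integral_mul_complex {α : Type*} {mα : MeasurableSpace α} {μ : Measure α}
    [IsFiniteMeasure μ] {U V : α → ℂ} (h : IndepFun U V μ)
    (hU : Measurable U) (hV : Measurable V)
    (hbU : ∀ a, ‖U a‖ ≤ 1) (hbV : ∀ a, ‖V a‖ ≤ 1) :
    ∫ a, U a * V a ∂μ = (∫ a, U a ∂μ) * ∫ a, V a ∂μ := by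
  set u1 : α → ℝ := fun a => (U a).re with hu1
  set u2 : α → ℝ := fun a => (U a).im with hu2
  set v1 : α → ℝ := fun a => (V a).re with hv1
  set v2 : α → ℝ := fun a => (V a).im with hv2
  have mu1 : Measurable u1 := Complex.measurable_re.comp hU
  have mu2 : Measurable u2 := Complex.measurable_im.comp hU
  have mv1 : Measurable v1 := Complex.measurable_re.comp hV
  have mv2 : Measurable v2 := Complex.measurable_im.comp hV
  have bu1 : ∀ a, ‖u1 a‖ ≤ 1 := fun a => le_trans (by simpa using Complex.abs_re_le_norm (U a)) (hbU a)
  have bu2 : ∀ a, ‖u2 a‖ ≤ 1 := fun a => le_trans (by simpa using Complex.abs_im_le_norm (U a)) (hbU a)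
  have bv1 : ∀ a, ‖v1 a‖ ≤ 1 := fun a => le_trans (by simpa using Complex.abs_re_le_norm (V a)) (hbV a)
  have bv2 : ∀ a, ‖v2 a‖ ≤ 1 := fun a => le_trans (by simpa using Complex.abs_im_le_norm (V a)) (hbV a)
  have iu1 : Integrable u1 μ := integrable_of_bound_one mu1.aestronglyMeasurable bu1
  have iu2 : Integrable u2 μ := integrable_of_bound_one mu2.aestronglyMeasurable bu2
  have iv1 : Integrable v1 μ := integrable_of_bound_one mv1.aestronglyMeasurable bv1
  have iv2 : Integrable v2 μ := integrable_of_bound_one mv2.aestronglyMeasurable bv2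
  have iU : Integrable U μ := integrable_of_bound_one hU.aestronglyMeasurable hbU
  have iV : Integrable V μ := integrable_of_bound_one hV.aestronglyMeasurable hbV
  have iUV : Integrable (fun a => U a * V a) μ :=
    integrable_of_bound_one (hU.mul hV).aestronglyMeasurable
      (fun a => by rw [norm_mul]; exact mul_le_one₀ (hbU a) (norm_nonneg _) (hbV a))
  have key : ∀ (x : α → ℝ) (y : α → ℝ), Measurable x → Measurable y →
      Integrable x μ → Integrable y μ →
      IndepFun x y μ → ∫ a, x a * y a ∂μ = (∫ a, x a ∂μ) * ∫ a, y a ∂μ := by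
    intro x y hx hy ix iy hxy
    have := hxy.integral_fun_mul_eq_mul_integral ix.aestronglyMeasurable iy.aestronglyMeasurable
    simpa [Pi.mul_apply] using this
  have h11 := key u1 v1 mu1 mv1 iu1 iv1 (h.comp Complex.measurable_re Complex.measurable_re)
  have h12 := key u1 v2 mu1 mv2 iu1 iv2 (h.comp Complex.measurable_re Complex.measurable_im)
  have h21 := key u2 v1 mu2 mv1 iu2 iv1 (h.comp Complex.measurable_im Complex.measurable_re)
  have h22 := key u2 v2 mu2 mv2 iu2 iv2 (h.comp Complex.measurable_im Complex.measurable_im)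
  have ire : ∀ (W : α → ℂ), Integrable W μ → ∫ a, (W a).re ∂μ = (∫ a, W a ∂μ).re := by
    intro W hW
    simpa using (integral_re hW : ∫ a, RCLike.re (W a) ∂μ = RCLike.re (∫ a, W a ∂μ))
  have iim : ∀ (W : α → ℂ), Integrable W μ → ∫ a, (W a).im ∂μ = (∫ a, W a ∂μ).im := by
    intro W hW
    simpa using (integral_im hW : ∫ a, RCLike.im (W a) ∂μ = RCLike.im (∫ a, W a ∂μ))
  have ip : ∀ (x y : α → ℝ), Measurable x → Measurable y → (∀ a, ‖x a‖ ≤ 1) →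
      (∀ a, ‖y a‖ ≤ 1) → Integrable (fun a => x a * y a) μ := fun x y hx hy bx hby =>
    integrable_of_bound_one (hx.mul hy).aestronglyMeasurable
      (fun a => by rw [norm_mul]; exact mul_le_one₀ (bx a) (norm_nonneg _) (hby a))
  apply Complex.ext
  · rw [← ire _ iUV]
    have e : ∀ a, ((U a) * (V a)).re = u1 a * v1 a - u2 a * v2 a := fun a => Complex.mul_re _ _
    rw [integral_congr_ae (Filter.Eventually.of_forall e),
      integral_sub (ip u1 v1 mu1 mv1 bu1 bv1) (ip u2 v2 mu2 mv2 bu2 bv2), h11, h22,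
      Complex.mul_re, ← ire _ iU, ← ire _ iV, ← iim _ iU, ← iim _ iV]
  · rw [← iim _ iUV]
    have e : ∀ a, ((U a) * (V a)).im = u1 a * v2 a + u2 a * v1 a := fun a => Complex.mul_im _ _
    rw [integral_congr_ae (Filter.Eventually.of_forall e),
      integral_add (ip u1 v2 mu1 mv2 bu1 bv2) (ip u2 v1 mu2 mv1 bu2 bv1), h12, h21,
      Complex.mul_im, ← ire _ iU, ← ire _ iV, ← iim _ iU, ← iim _ iV]

/-- If `c̃₁, c̃₂` are conditionally independent given `Θ` and each is conditionally
uniform on `[−π/K, π/K)` given `Θ`, then `E[e^{−i c̃₁} e^{i c̃₂}] = sinc²(1/K)`. -/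
theorem stmt_7 {Ω : Type*} [MeasureSpace Ω] [StandardBorelSpace Ω]
    [IsProbabilityMeasure (volume : Measure Ω)]
    {γ : Type*} [MeasurableSpace γ] [StandardBorelSpace γ] [Nonempty γ]
    (K : ℕ) (hK : 1 ≤ K)
    (c₁ c₂ : Ω → ℝ) (Θ : Ω → γ)
    (hc₁ : Measurable c₁) (hc₂ : Measurable c₂) (hΘ : Measurable Θ)
    (hCondIndep : CondIndepFun (MeasurableSpace.comap Θ inferInstance) (hΘ.comap_le)
      c₁ c₂ (volume : Measure Ω))
    (hUnif₁ : ∀ᵐ θ ∂(Measure.map Θ (volume : Measure Ω)),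
      condDistrib c₁ Θ (volume : Measure Ω) θ =
        (ENNReal.ofReal ((K : ℝ) / (2 * π))) •
          (volume.restrict (Set.Ico (-(π / (K : ℝ))) (π / (K : ℝ)))))
    (hUnif₂ : ∀ᵐ θ ∂(Measure.map Θ (volume : Measure Ω)),
      condDistrib c₂ Θ (volume : Measure Ω) θ =
        (ENNReal.ofReal ((K : ℝ) / (2 * π))) •
          (volume.restrict (Set.Ico (-(π / (K : ℝ))) (π / (K : ℝ))))) :
    (∫ ω, Complex.exp (-(c₁ ω : ℂ) * Complex.I) * Complex.exp ((c₂ ω : ℂ) * Complex.I)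
        ∂(volume : Measure Ω)) =
      ((Real.sin (π / K) / (π / K) : ℝ) : ℂ) ^ 2 := by
  set μ := (volume : Measure Ω) with hμ
  have hm' : MeasurableSpace.comap Θ inferInstance ≤ (inferInstance : MeasurableSpace Ω) :=
    hΘ.comap_le
  set s : ℝ := Real.sin (π / K) / (π / K) with hs
  -- the two functions
  set f : ℝ → ℂ := fun x => Complex.exp (-Complex.I * x) with hfdef
  set g : ℝ → ℂ := fun x => Complex.exp (Complex.I * x) with hgdef
  have mf : Measurable f := Complex.measurable_exp.comp (Complex.measurable_ofReal.const_mul _)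
  have mg : Measurable g := Complex.measurable_exp.comp (Complex.measurable_ofReal.const_mul _)
  have hbf : ∀ x : ℝ, ‖f x‖ ≤ 1 := fun x => by simp [hfdef, Complex.norm_exp]
  have hbg : ∀ x : ℝ, ‖g x‖ ≤ 1 := fun x => by simp [hgdef, Complex.norm_exp]
  set F : Ω → ℂ := fun ω => f (c₁ ω) * g (c₂ ω) with hFdef
  have mF : Measurable F := (mf.comp hc₁).mul (mg.comp hc₂)
  have hbF : ∀ ω, ‖F ω‖ ≤ 1 := fun ω => by
    rw [hFdef, norm_mul]
    exact mul_le_one₀ (hbf _) (norm_nonneg _) (hbg _)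
  have iF : Integrable F μ := integrable_of_bound_one mF.aestronglyMeasurable hbF
  have if₁ : Integrable (fun ω => f (c₁ ω)) μ :=
    integrable_of_bound_one (mf.comp hc₁).aestronglyMeasurable (fun ω => hbf _)
  have if₂ : Integrable (fun ω => g (c₂ ω)) μ :=
    integrable_of_bound_one (mg.comp hc₂).aestronglyMeasurable (fun ω => hbg _)
  -- conditional expectations
  have h2 : μ[F|MeasurableSpace.comap Θ inferInstance] =ᵐ[μ] fun ω => ∫ y, F y ∂(condExpKernel μ (MeasurableSpace.comap Θ inferInstance) ω) :=
    condExp_ae_eq_integral_condExpKernel hm' iF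
  have h3 : ∀ᵐ ω ∂μ, IndepFun c₁ c₂ (condExpKernel μ (MeasurableSpace.comap Θ inferInstance) ω) :=
    ae_indepFun hm' hc₁ hc₂ hCondIndep
  have h4 : ∀ᵐ ω ∂μ, ∫ y, F y ∂(condExpKernel μ (MeasurableSpace.comap Θ inferInstance) ω) =
      (∫ y, f (c₁ y) ∂(condExpKernel μ (MeasurableSpace.comap Θ inferInstance) ω)) * ∫ y, g (c₂ y) ∂(condExpKernel μ (MeasurableSpace.comap Θ inferInstance) ω) :=
    h3.mono fun ω hω =>
      indep_integral_mul_complex (hω.comp mf mg) (mf.comp hc₁) (mg.comp hc₂)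
        (fun y => hbf _) (fun y => hbg _)
  -- identify the conditional marginal integrals
  have hA : ∀ᵐ ω ∂μ, ∫ y, f (c₁ y) ∂(condExpKernel μ (MeasurableSpace.comap Θ inferInstance) ω) = (s : ℂ) := by
    have e1 : μ[fun ω => f (c₁ ω)|MeasurableSpace.comap Θ inferInstance] =ᵐ[μ]
        fun ω => ∫ y, f (c₁ y) ∂(condExpKernel μ (MeasurableSpace.comap Θ inferInstance) ω) :=
      condExp_ae_eq_integral_condExpKernel hm' if₁
    have e2 : μ[fun ω => f (c₁ ω)|MeasurableSpace.comap Θ inferInstance] =ᵐ[μ]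
        fun ω => ∫ y, f y ∂(condDistrib c₁ Θ μ (Θ ω)) :=
      condExp_ae_eq_integral_condDistrib hΘ hc₁.aemeasurable mf.stronglyMeasurable if₁
    have e3 : ∀ᵐ ω ∂μ, condDistrib c₁ Θ μ (Θ ω) =
        (ENNReal.ofReal ((K : ℝ) / (2 * π))) •
          (volume.restrict (Set.Ico (-(π / (K : ℝ))) (π / (K : ℝ)))) :=
      ae_of_ae_map hΘ.aemeasurable hUnif₁
    filter_upwards [e1.symm.trans e2, e3] with ω h h'
    rw [h, h', hfdef]
    exact unif_int K hK _ (Or.inr rfl)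
  have hB : ∀ᵐ ω ∂μ, ∫ y, g (c₂ y) ∂(condExpKernel μ (MeasurableSpace.comap Θ inferInstance) ω) = (s : ℂ) := by
    have e1 : μ[fun ω => g (c₂ ω)|MeasurableSpace.comap Θ inferInstance] =ᵐ[μ]
        fun ω => ∫ y, g (c₂ y) ∂(condExpKernel μ (MeasurableSpace.comap Θ inferInstance) ω) :=
      condExp_ae_eq_integral_condExpKernel hm' if₂
    have e2 : μ[fun ω => g (c₂ ω)|MeasurableSpace.comap Θ inferInstance] =ᵐ[μ]
        fun ω => ∫ y, g y ∂(condDistrib c₂ Θ μ (Θ ω)) :=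
      condExp_ae_eq_integral_condDistrib hΘ hc₂.aemeasurable mg.stronglyMeasurable if₂
    have e3 : ∀ᵐ ω ∂μ, condDistrib c₂ Θ μ (Θ ω) =
        (ENNReal.ofReal ((K : ℝ) / (2 * π))) •
          (volume.restrict (Set.Ico (-(π / (K : ℝ))) (π / (K : ℝ)))) :=
      ae_of_ae_map hΘ.aemeasurable hUnif₂
    filter_upwards [e1.symm.trans e2, e3] with ω h h'
    rw [h, h', hgdef]
    exact unif_int K hK _ (Or.inl rfl)
  have hfin : μ[F|MeasurableSpace.comap Θ inferInstance] =ᵐ[μ] fun _ => (s : ℂ) * (s : ℂ) := by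
    filter_upwards [h2, h4, hA, hB] with ω p2 p4 pA pB
    rw [p2, p4, pA, pB]
  have hgoal : (fun ω => Complex.exp (-(c₁ ω : ℂ) * Complex.I) *
      Complex.exp ((c₂ ω : ℂ) * Complex.I)) = F := by
    funext ω
    rw [hFdef, hfdef, hgdef]
    simp only []
    rw [show -((c₁ ω : ℝ) : ℂ) * Complex.I = -Complex.I * (c₁ ω : ℝ) by ring,
      show ((c₂ ω : ℝ) : ℂ) * Complex.I = Complex.I * (c₂ ω : ℝ) by ring]
  calc ∫ ω, Complex.exp (-(c₁ ω : ℂ) * Complex.I) * Complex.exp ((c₂ ω : ℂ) * Complex.I) ∂μ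
      = ∫ ω, F ω ∂μ := by rw [hgoal]
    _ = ∫ ω, (μ[F|MeasurableSpace.comap Θ inferInstance]) ω ∂μ := (integral_condExp hm').symm
    _ = ∫ _ω, ((s : ℂ) * (s : ℂ)) ∂μ := integral_congr_ae hfin
    _ = (s : ℂ) * (s : ℂ) := by simp [measure_univ]
    _ = ((s : ℝ) : ℂ) ^ 2 := by ring
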